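/- For every n ≥ 0, one has the identity of polynomials A_{n+1}(x,y,s) = Σ_{i=0}^{n} C(n,i) Ã_i(x,y) d_{n-i}(x,y,s). In particular, A_{n+1}(x,1,0) = Σ_{i=0}^{n} C(n,i) A_i(x) d_{n-i}(x), where A_i(x) is the Eulerian polynomial and d_{n-i}(x) the derangement polynomial. -/

import Mathlib

open scoped Classical
open Finset

noncomputable section

/-- 1-based value of a permutation of `Fin n` at position `k ∈ [1,n]`; `0` elsewhere. -/
def permVal {n : ℕ} (π : Equiv.Perm (Fin n)) (k : ℕ) : ℕ :=
  if h : 1 ≤ k ∧ k ≤ n then (π ⟨k - 1, by omega⟩).val + 1 else 0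

/-- number of descents -/
def desNum {n : ℕ} (π : Equiv.Perm (Fin n)) : ℕ :=
  ((Finset.Icc 1 (n - 1)).filter fun i => permVal π (i + 1) < permVal π i).card

/-- number of ascents -/
def ascNum {n : ℕ} (π : Equiv.Perm (Fin n)) : ℕ :=
  ((Finset.Icc 1 (n - 1)).filter fun i => permVal π i < permVal π (i + 1)).card

/-- number of big ascents -/
def bascNum {n : ℕ} (π : Equiv.Perm (Fin n)) : ℕ :=
  ((Finset.Icc 1 (n - 1)).filter fun i => permVal π i + 2 ≤ permVal π (i + 1)).card

/-- number of successions -/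
def sucNum {n : ℕ} (π : Equiv.Perm (Fin n)) : ℕ :=
  ((Finset.Icc 1 (n - 1)).filter fun i => permVal π (i + 1) = permVal π i + 1).card

/-- number of excedances -/
def excNum {n : ℕ} (π : Equiv.Perm (Fin n)) : ℕ :=
  ((Finset.Icc 1 n).filter fun i => i < permVal π i).card

/-- number of anti-excedances -/
def aexcNum {n : ℕ} (π : Equiv.Perm (Fin n)) : ℕ :=
  ((Finset.Icc 1 n).filter fun i => permVal π i < i).card

/-- number of fixed points -/
def fixNum {n : ℕ} (π : Equiv.Perm (Fin n)) : ℕ :=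
  ((Finset.Icc 1 n).filter fun i => permVal π i = i).card

/-- number of cycles (counted as number of cycle minima) -/
def cycNum {n : ℕ} (π : Equiv.Perm (Fin n)) : ℕ :=
  ((Finset.Icc 1 n).filter fun i => ∀ m : ℕ, i ≤ (permVal π)^[m] i).card

/-- number of left peaks (with the convention π(0)=0) -/
def lpkNum {n : ℕ} (π : Equiv.Perm (Fin n)) : ℕ :=
  ((Finset.Icc 1 (n - 1)).filter fun i =>
    permVal π (i - 1) < permVal π i ∧ permVal π (i + 1) < permVal π i).card

/-- `π` has no cycle double ascents. -/
def CdaFree {n : ℕ} (π : Equiv.Perm (Fin n)) : Prop :=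
  ∀ v ∈ Finset.Icc 1 n, ¬ (permVal π⁻¹ v < v ∧ v < permVal π v)

/-- value at `v` of the permutation of `[n-k]` obtained from `π` by removing
the `k` largest letters: `π^m(v)` for the least `m ≥ 1` with `π^m(v) ≤ n-k`. -/
def removeVal {n : ℕ} (π : Equiv.Perm (Fin n)) (k v : ℕ) : ℕ :=
  permVal (π ^ (WithTop.untopD 1
    (((Finset.Icc 1 n).filter fun m => permVal (π ^ m) v ≤ n - k).min))) v

/-- simsun permutation of the second kind -/
def Simsun2 {n : ℕ} (π : Equiv.Perm (Fin n)) : Prop :=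
  ∀ k ≤ n, ∀ v ∈ Finset.Icc 1 (n - k),
    ¬ (removeVal π⁻¹ k v < v ∧ v < removeVal π k v)

/-- Eulerian polynomial -/
def EulerA (n : ℕ) (x : ℝ) : ℝ := ∑ π : Equiv.Perm (Fin n), x ^ desNum π

/-- derangement polynomial -/
def dpoly (n : ℕ) (x : ℝ) : ℝ :=
  ∑ π ∈ (Finset.univ : Finset (Equiv.Perm (Fin n))).filter (fun π => fixNum π = 0),
    x ^ excNum π

/-- `A_n(x,y,s) = Σ_π x^basc(π) y^des(π) s^suc(π)` -/
def Apoly (n : ℕ) (x y s : ℝ) : ℝ :=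
  ∑ π : Equiv.Perm (Fin n), x ^ bascNum π * y ^ desNum π * s ^ sucNum π

/- ### Signed permutations -/

/-- 1-based (integer) value of a signed permutation encoded as `σ : Fin n → Fin n × Bool`,
where the `Bool` records a negative sign. -/
def bval {n : ℕ} (σ : Fin n → Fin n × Bool) (k : ℕ) : ℤ :=
  if h : 1 ≤ k ∧ k ≤ n then
    (if (σ ⟨k - 1, by omega⟩).2 then -(((σ ⟨k - 1, by omega⟩).1 : ℤ) + 1)
     else ((σ ⟨k - 1, by omega⟩).1 : ℤ) + 1)
  else 0

/-- The hyperoctahedral group `B_n`: signed permutations of order `n`, encoded as maps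
`Fin n → Fin n × Bool` whose first component is injective. -/
def BPerms (n : ℕ) : Finset (Fin n → Fin n × Bool) :=
  Finset.univ.filter fun σ => Function.Injective fun i => (σ i).1

/-- type B excedances: positions `i` with `σ(|σ(i)|) > σ(i)` -/
def bexcNum {n : ℕ} (σ : Fin n → Fin n × Bool) : ℕ :=
  ((Finset.Icc 1 n).filter fun i => bval σ i < bval σ (bval σ i).natAbs).card

/-- type B anti-excedances: positions `i` with `σ(|σ(i)|) < σ(i)` -/
def baexcNum {n : ℕ} (σ : Fin n → Fin n × Bool) : ℕ :=
  ((Finset.Icc 1 n).filter fun i => bval σ (bval σ i).natAbs < bval σ i).card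

/-- fixed points: `σ(i) = i` -/
def bfixNum {n : ℕ} (σ : Fin n → Fin n × Bool) : ℕ :=
  ((Finset.Icc 1 n).filter fun i => bval σ i = (i : ℤ)).card

/-- singletons: `σ(i) = -i` -/
def bstNum {n : ℕ} (σ : Fin n → Fin n × Bool) : ℕ :=
  ((Finset.Icc 1 n).filter fun i => bval σ i = -(i : ℤ)).card

/-- number of negative entries -/
def bnegNum {n : ℕ} (σ : Fin n → Fin n × Bool) : ℕ :=
  ((Finset.Icc 1 n).filter fun i => bval σ i < 0).card

/-- number of cycles of the permutation `i ↦ |σ(i)|` of `[n]` -/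
def bcycNum {n : ℕ} (σ : Fin n → Fin n × Bool) : ℕ :=
  ((Finset.Icc 1 n).filter fun i => ∀ m : ℕ, i ≤ (fun k => (bval σ k).natAbs)^[m] i).card

/-- weak excedances: `σ(i) = i` or `σ(|σ(i)|) > σ(i)` -/
def bwexcNum {n : ℕ} (σ : Fin n → Fin n × Bool) : ℕ :=
  ((Finset.Icc 1 n).filter fun i =>
    bval σ i = (i : ℤ) ∨ bval σ i < bval σ (bval σ i).natAbs).card

/-- `B_n(x,y,s,t,p,q)` -/
def Bpoly (n : ℕ) (x y s t p q : ℝ) : ℝ :=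
  ∑ σ ∈ BPerms n, x ^ bexcNum σ * y ^ baexcNum σ * s ^ bfixNum σ *
    t ^ bstNum σ * p ^ bcycNum σ * q ^ bnegNum σ


/-- `Ã_n(x,y) = Σ_π x^asc(π) y^(des(π)+1)` for `n ≥ 1`, with `Ã_0 = 1` -/
def Atil (n : ℕ) (x y : ℝ) : ℝ :=
  if n = 0 then 1 else ∑ π : Equiv.Perm (Fin n), x ^ ascNum π * y ^ (desNum π + 1)

/-- `d_n(x,y,s) = Σ_π x^exc(π) y^aexc(π) s^fix(π)` -/
def dxys (n : ℕ) (x y s : ℝ) : ℝ :=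
  ∑ π : Equiv.Perm (Fin n), x ^ excNum π * y ^ aexcNum π * s ^ fixNum π

namespace Stmt4Dev

open Finset MvPolynomial

/-! ### permVal API -/

lemma permVal_of {n : ℕ} (π : Equiv.Perm (Fin n)) {k : ℕ} (h1 : 1 ≤ k) (h2 : k ≤ n) :
    permVal π k = (π ⟨k - 1, by omega⟩ : Fin n).val + 1 := by
  rw [permVal, dif_pos ⟨h1, h2⟩]

lemma permVal_out {n : ℕ} (π : Equiv.Perm (Fin n)) {k : ℕ} (h : k = 0 ∨ n < k) :
    permVal π k = 0 := by
  rw [permVal, dif_neg]; omega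

lemma permVal_ge {n : ℕ} (π : Equiv.Perm (Fin n)) {k : ℕ} (h1 : 1 ≤ k) (h2 : k ≤ n) :
    1 ≤ permVal π k := by
  rw [permVal_of π h1 h2]; omega

lemma permVal_le {n : ℕ} (π : Equiv.Perm (Fin n)) {k : ℕ} (h1 : 1 ≤ k) (h2 : k ≤ n) :
    permVal π k ≤ n := by
  rw [permVal_of π h1 h2]
  have := (π ⟨k - 1, by omega⟩).is_lt; omega

lemma permVal_inj {n : ℕ} (π : Equiv.Perm (Fin n)) {k l : ℕ} (hk1 : 1 ≤ k) (hk2 : k ≤ n)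
    (hl1 : 1 ≤ l) (hl2 : l ≤ n) (h : permVal π k = permVal π l) : k = l := by
  rw [permVal_of π hk1 hk2, permVal_of π hl1 hl2] at h
  have h2 : π ⟨k - 1, by omega⟩ = π ⟨l - 1, by omega⟩ := Fin.ext (by omega)
  have h3 := π.injective h2
  have h4 : k - 1 = l - 1 := congrArg Fin.val h3
  omega

lemma permVal_ext {n : ℕ} {π π' : Equiv.Perm (Fin n)}
    (h : ∀ k, 1 ≤ k → k ≤ n → permVal π k = permVal π' k) : π = π' := by
  apply Equiv.ext
  intro j
  have h1 := h (j.val + 1) (by omega) (by have := j.is_lt; omega)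
  rw [permVal_of π (by omega) (by have := j.is_lt; omega),
    permVal_of π' (by omega) (by have := j.is_lt; omega)] at h1
  have : π ⟨j.val + 1 - 1, by have := j.is_lt; omega⟩ = π' ⟨j.val + 1 - 1, by have := j.is_lt; omega⟩ :=
    Fin.ext (by omega)
  simpa using this

/-- the position of the maximal letter -/
lemma exists_max_pos {n : ℕ} (hn : 1 ≤ n) (π : Equiv.Perm (Fin n)) :
    ∃ p, (1 ≤ p ∧ p ≤ n ∧ permVal π p = n) ∧
      ∀ q, 1 ≤ q → q ≤ n → permVal π q = n → q = p := by
  refine ⟨(π.symm ⟨n - 1, by omega⟩).val + 1, ⟨by omega, by have := (π.symm ⟨n - 1, by omega⟩).is_lt; omega, ?_⟩, ?_⟩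
  · rw [permVal_of π (by omega) (by have := (π.symm ⟨n - 1, by omega⟩).is_lt; omega)]
    have : π (π.symm ⟨n - 1, by omega⟩) = ⟨n - 1, by omega⟩ := π.apply_symm_apply _
    rw [show (⟨(π.symm ⟨n - 1, by omega⟩).val + 1 - 1, by have := (π.symm ⟨n-1, by omega⟩).is_lt; omega⟩ : Fin n) = π.symm ⟨n - 1, by omega⟩ from Fin.ext (by simp)]
    rw [this]; simp; omega
  · intro q h1 h2 h3
    have h4 : permVal π ((π.symm ⟨n - 1, by omega⟩).val + 1) = n := by
      rw [permVal_of π (by omega) (by have := (π.symm ⟨n - 1, by omega⟩).is_lt; omega)]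
      have : π (π.symm ⟨n - 1, by omega⟩) = ⟨n - 1, by omega⟩ := π.apply_symm_apply _
      rw [show (⟨(π.symm ⟨n - 1, by omega⟩).val + 1 - 1, by have := (π.symm ⟨n-1, by omega⟩).is_lt; omega⟩ : Fin n) = π.symm ⟨n - 1, by omega⟩ from Fin.ext (by simp)]
      rw [this]; simp; omega
    exact permVal_inj π h1 h2 (by omega) (by have := (π.symm ⟨n - 1, by omega⟩).is_lt; omega) (h3.trans h4.symm)

end Stmt4Dev
namespace Stmt4Dev

open Finset

/-! ### generic counting lemmas -/

/-- instance-independent indicator -/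
noncomputable def ind (c : Prop) : ℕ := if c then 1 else 0

lemma ind_pos {c : Prop} (h : c) : ind c = 1 := by simp [ind, h]

lemma ind_neg {c : Prop} (h : ¬c) : ind c = 0 := by simp [ind, h]

lemma ind_congr {c d : Prop} (h : c ↔ d) : ind c = ind d := by
  by_cases hc : c
  · rw [ind_pos hc, ind_pos (h.mp hc)]
  · rw [ind_neg hc, ind_neg (fun hd => hc (h.mpr hd))]

lemma ite_eq_ind {c : Prop} [Decidable c] : (if c then 1 else 0 : ℕ) = ind c := by
  by_cases h : c <;> simp [ind, h]

lemma card_filter_eq_sum_ind {s : Finset ℕ} {c : ℕ → Prop} [DecidablePred c] :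
    (s.filter c).card = ∑ j ∈ s, ind (c j) := by
  rw [Finset.card_filter]
  exact Finset.sum_congr rfl fun j _ => ite_eq_ind

lemma sum_shift {a b : ℕ} (f g : ℕ → ℕ) (ha : 1 ≤ a)
    (h : ∀ j, a ≤ j → j < b → f j = g (j - 1)) :
    ∑ j ∈ Ico a b, f j = ∑ j ∈ Ico (a - 1) (b - 1), g j := by
  apply Finset.sum_nbij' (fun j => j - 1) (fun j => j + 1)
  · intro x hx; simp only [mem_Ico] at *; omega
  · intro x hx; simp only [mem_Ico] at *; omega
  · intro x hx; simp only [mem_Ico] at *; omega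
  · intro x hx; simp only [mem_Ico] at *; omega
  · intro x hx; simp only [mem_Ico] at hx; exact h x hx.1 hx.2

/-- The master lemma for gap statistics under insertion of a new maximal letter `m+1`
after position `p` (so `p = 0` means at the front). -/
lemma gap_count (r : ℕ → ℕ → Prop) [DecidableRel r] (m p : ℕ) (hm : 1 ≤ m) (hp : p ≤ m)
    (w w' : ℕ → ℕ)
    (h1 : ∀ k, 1 ≤ k → k ≤ p → w' k = w k)
    (h2 : w' (p + 1) = m + 1)
    (h3 : ∀ k, p + 2 ≤ k → k ≤ m + 1 → w' k = w (k - 1)) :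
    ((Finset.Icc 1 m).filter fun i => r (w' i) (w' (i + 1))).card
      + ind (1 ≤ p ∧ p ≤ m - 1 ∧ r (w p) (w (p + 1)))
    = ((Finset.Icc 1 (m - 1)).filter fun i => r (w i) (w (i + 1))).card
      + ind (1 ≤ p ∧ r (w p) (m + 1))
      + ind (p ≤ m - 1 ∧ r (m + 1) (w (p + 1))) := by
  classical
  set χ' : ℕ → ℕ := fun i => ind (r (w' i) (w' (i + 1))) with hχ'
  set χ : ℕ → ℕ := fun i => ind (r (w i) (w (i + 1))) with hχ
  have e1 : ((Finset.Icc 1 m).filter fun i => r (w' i) (w' (i + 1))).card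
      = ∑ j ∈ Ico 1 (m + 1), χ' j := by
    rw [show Finset.Icc 1 m = Finset.Ico 1 (m + 1) from by
      ext j; simp only [mem_Icc, mem_Ico]; omega]
    exact card_filter_eq_sum_ind
  have e2 : ((Finset.Icc 1 (m - 1)).filter fun i => r (w i) (w (i + 1))).card
      = ∑ j ∈ Ico 1 m, χ j := by
    rw [show Finset.Icc 1 (m - 1) = Finset.Ico 1 m from by
      ext j; simp only [mem_Icc, mem_Ico]; omega]
    exact card_filter_eq_sum_ind
  rw [e1, e2]
  have s1 : ∑ j ∈ Ico 1 (m + 1), χ' j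
      = ∑ j ∈ Ico 1 (p + 1), χ' j + ∑ j ∈ Ico (p + 1) (m + 1), χ' j :=
    (Finset.sum_Ico_consecutive _ (by omega) (by omega)).symm
  have s2 : ∑ j ∈ Ico 1 (p + 1), χ' j
      = ∑ j ∈ Ico 1 p, χ j + ind (1 ≤ p ∧ r (w p) (m + 1)) := by
    by_cases hp0 : 1 ≤ p
    · rw [Finset.sum_Ico_succ_top hp0]
      congr 1
      · apply Finset.sum_congr rfl
        intro j hj
        simp only [mem_Ico] at hj
        simp only [hχ', hχ]
        rw [h1 j (by omega) (by omega), h1 (j + 1) (by omega) (by omega)]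
      · simp only [hχ']
        rw [h1 p (by omega) le_rfl, h2]
        exact (ind_congr (and_iff_right hp0)).symm
    · have hp0' : p = 0 := by omega
      subst hp0'
      rw [ind_neg (fun hc => absurd hc.1 (by omega))]
      simp
  have s3 : ∑ j ∈ Ico (p + 1) (m + 1), χ' j
      = ind (p ≤ m - 1 ∧ r (m + 1) (w (p + 1))) + ∑ j ∈ Ico (p + 1) m, χ j := by
    by_cases hpm : p = m
    · rw [ind_neg (fun hc => absurd hc.1 (by omega)), hpm]
      simp
    · rw [Finset.sum_eq_sum_Ico_succ_bot (by omega : p + 1 < m + 1)]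
      congr 1
      · simp only [hχ']
        rw [h2, h3 (p + 2) le_rfl (by omega), show p + 2 - 1 = p + 1 from by omega]
        exact (ind_congr (and_iff_right (by omega : p ≤ m - 1))).symm
      · rw [sum_shift χ' χ (by omega)]
        · congr 1 <;> omega
        · intro j hj1 hj2
          simp only [hχ', hχ]
          rw [h3 j (by omega) (by omega), h3 (j + 1) (by omega) (by omega),
            show j + 1 - 1 = j - 1 + 1 from by omega]
  have s4 : ∑ j ∈ Ico 1 m, χ j
      = ∑ j ∈ Ico 1 p, χ j + ind (1 ≤ p ∧ p ≤ m - 1 ∧ r (w p) (w (p + 1)))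
        + ∑ j ∈ Ico (p + 1) m, χ j := by
    by_cases hp0 : 1 ≤ p
    · by_cases hpm : p = m
      · rw [ind_neg (fun hc => absurd hc.2.1 (by omega)),
          show (Ico (p + 1) m : Finset ℕ) = ∅ from Finset.Ico_eq_empty (by omega),
          show (Ico 1 m : Finset ℕ) = Ico 1 p from by rw [hpm]]
        simp
      · have hsplit : ∑ j ∈ Ico 1 m, χ j = ∑ j ∈ Ico 1 (p + 1), χ j + ∑ j ∈ Ico (p + 1) m, χ j :=
          (Finset.sum_Ico_consecutive _ (by omega) (by omega)).symm
        rw [hsplit, Finset.sum_Ico_succ_top hp0]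
        congr 2
        simp only [hχ]
        refine (ind_congr ?_).symm
        constructor
        · exact fun hc => hc.2.2
        · exact fun hc => ⟨hp0, by omega, hc⟩
    · have hp0' : p = 0 := by omega
      subst hp0'
      rw [ind_neg (fun hc => absurd hc.1 (by omega))]
      simp
  rw [s1, s2, s3, s4]
  omega

/-- point statistic count: replacing the value at one point `t` by `m+1`
and appending the old value at position `m+1`. -/
lemma point_count (r : ℕ → ℕ → Prop) [DecidableRel r] (m : ℕ) (w w' : ℕ → ℕ)
    (t : ℕ) (ht1 : 1 ≤ t) (ht2 : t ≤ m)
    (h1 : ∀ k, 1 ≤ k → k ≤ m → k ≠ t → w' k = w k)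
    (h2 : w' t = m + 1) (h3 : w' (m + 1) = w t) :
    ((Icc 1 (m + 1)).filter fun i => r i (w' i)).card + ind (r t (w t))
    = ((Icc 1 m).filter fun i => r i (w i)).card + ind (r t (m + 1))
      + ind (r (m + 1) (w t)) := by
  classical
  rw [card_filter_eq_sum_ind, card_filter_eq_sum_ind]
  rw [Finset.sum_Icc_succ_top (by omega : 1 ≤ m + 1)]
  rw [h3]
  have ht : t ∈ Icc 1 m := by simp only [mem_Icc]; omega
  rw [← Finset.add_sum_erase _ _ ht, ← Finset.add_sum_erase _ (fun i => ind (r i (w i))) ht]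
  rw [h2]
  have heq : ∑ i ∈ (Icc 1 m).erase t, ind (r i (w' i))
      = ∑ i ∈ (Icc 1 m).erase t, ind (r i (w i)) := by
    apply Finset.sum_congr rfl
    intro j hj
    simp only [Finset.mem_erase, mem_Icc] at hj
    rw [h1 j (by omega) (by omega) hj.1]
  rw [heq]
  omega

/-- point statistic count for extension by a new fixed point. -/
lemma point_count_ext (r : ℕ → ℕ → Prop) [DecidableRel r] (m : ℕ) (w w' : ℕ → ℕ)
    (h1 : ∀ k, 1 ≤ k → k ≤ m → w' k = w k) (h2 : w' (m + 1) = m + 1) :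
    ((Icc 1 (m + 1)).filter fun i => r i (w' i)).card
    = ((Icc 1 m).filter fun i => r i (w i)).card + ind (r (m + 1) (m + 1)) := by
  classical
  rw [card_filter_eq_sum_ind, card_filter_eq_sum_ind]
  rw [Finset.sum_Icc_succ_top (by omega : 1 ≤ m + 1), h2]
  congr 1
  · apply Finset.sum_congr rfl
    intro j hj
    simp only [mem_Icc] at hj
    rw [h1 j (by omega) (by omega)]

end Stmt4Dev
namespace Stmt4Dev

open Finset

/-! ### insertion of a maximal letter into the one-line notation -/

/-- insert the letter `m+1` right after position `p` (`p = 0`: at the front). -/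
def insF {m : ℕ} (π : Equiv.Perm (Fin m)) (p : Fin (m + 1)) (j : Fin (m + 1)) : Fin (m + 1) :=
  if h : (j : ℕ) < (p : ℕ) then (π ⟨j, by have := p.is_lt; omega⟩).castSucc
  else if h2 : (j : ℕ) = (p : ℕ) then Fin.last m
  else (π ⟨(j : ℕ) - 1, by have := j.is_lt; have := p.is_lt; omega⟩).castSucc

lemma insF_injective {m : ℕ} (π : Equiv.Perm (Fin m)) (p : Fin (m + 1)) :
    Function.Injective (insF π p) := by
  intro a b hab
  unfold insF at hab
  have hlast : ∀ x : Fin m, x.castSucc ≠ Fin.last m := fun x => (Fin.castSucc_lt_last x).ne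
  split_ifs at hab with h1 h2 h3 h4 h5
  all_goals first
  | exact absurd hab (hlast _)
  | exact absurd hab.symm (hlast _)
  | exact Fin.ext (by omega)
  | (have h7 := π.injective (Fin.castSucc_injective m hab)
     simp only [Fin.mk.injEq] at h7
     exact Fin.ext (by omega))

def insP {m : ℕ} (π : Equiv.Perm (Fin m)) (p : Fin (m + 1)) : Equiv.Perm (Fin (m + 1)) :=
  Equiv.ofBijective _ (Finite.injective_iff_bijective.mp (insF_injective π p))

lemma insP_apply {m : ℕ} (π : Equiv.Perm (Fin m)) (p : Fin (m + 1)) (j : Fin (m + 1)) :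
    insP π p j = insF π p j := rfl

/-- the word of the inserted permutation -/
lemma permVal_insP {m : ℕ} (π : Equiv.Perm (Fin m)) (p : Fin (m + 1)) {k : ℕ}
    (h1 : 1 ≤ k) (h2 : k ≤ m + 1) :
    permVal (insP π p) k =
      if k ≤ (p : ℕ) then permVal π k
      else if k = (p : ℕ) + 1 then m + 1
      else permVal π (k - 1) := by
  rw [permVal_of _ h1 h2, insP_apply]
  unfold insF
  rcases Nat.lt_or_ge (k - 1) (p : ℕ) with h | h
  · rw [dif_pos (by simpa using h), if_pos (by omega)]
    rw [permVal_of π h1 (by have := p.is_lt; omega)]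
    simp
  · rw [dif_neg (by simpa using Nat.not_lt.mpr h)]
    rcases Nat.eq_or_lt_of_le h with h3 | h3
    · rw [dif_pos (by simpa using h3.symm), if_neg (by omega), if_pos (by omega)]
      simp [Fin.last]
    · rw [dif_neg (by simp; omega), if_neg (by omega), if_neg (by omega)]
      rw [permVal_of π (by omega) (by have := h2; omega)]
      simp

/-- position `p` gets the maximum -/
lemma insP_max {m : ℕ} (π : Equiv.Perm (Fin m)) (p : Fin (m + 1)) :
    permVal (insP π p) ((p : ℕ) + 1) = m + 1 := by
  rw [permVal_insP π p (by omega) (by have := p.is_lt; omega)]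
  rw [if_neg (by omega), if_pos rfl]

lemma insP_inj {m : ℕ} {π π' : Equiv.Perm (Fin m)} {p p' : Fin (m + 1)}
    (h : insP π p = insP π' p') : π = π' ∧ p = p' := by
  have hp : p = p' := by
    have h1 : insP π p p = Fin.last m := by
      rw [insP_apply]; unfold insF
      rw [dif_neg (by omega), dif_pos rfl]
    have h2 : insP π' p' p' = Fin.last m := by
      rw [insP_apply]; unfold insF
      rw [dif_neg (by omega), dif_pos rfl]
    rw [h] at h1
    exact (insP π' p').injective (h1.trans h2.symm)
  refine ⟨?_, hp⟩
  subst hp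
  apply permVal_ext
  intro k hk1 hk2
  have e1 := permVal_insP π p (k := k) hk1 (by omega)
  have e2 := permVal_insP π' p (k := k) hk1 (by omega)
  by_cases hkp : k ≤ (p : ℕ)
  · rw [if_pos hkp] at e1 e2
    rw [← e1, ← e2, h]
  · have e1' := permVal_insP π p (k := k + 1) (by omega) (by omega)
    have e2' := permVal_insP π' p (k := k + 1) (by omega) (by omega)
    rw [if_neg (by omega), if_neg (by omega)] at e1' e2'
    simp only [Nat.add_sub_cancel] at e1' e2'
    rw [← e1', ← e2', h]

/-- reindexing a sum over `S_{m+1}` as a sum over insertions -/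
lemma sum_insP {m : ℕ} {β : Type*} [AddCommMonoid β] (F : Equiv.Perm (Fin (m + 1)) → β) :
    ∑ σ : Equiv.Perm (Fin (m + 1)), F σ
      = ∑ π : Equiv.Perm (Fin m), ∑ p : Fin (m + 1), F (insP π p) := by
  rw [← Finset.sum_product']
  symm
  apply Finset.sum_bij (fun a _ => insP a.1 a.2)
  · intro a _; exact Finset.mem_univ _
  · intro a _ b _ hab
    have := insP_inj hab
    exact Prod.ext this.1 this.2
  · intro σ _
    have hcard : (Finset.univ : Finset (Equiv.Perm (Fin (m + 1)))).card
        ≤ ((Finset.univ : Finset (Equiv.Perm (Fin m))) ×ˢ (Finset.univ : Finset (Fin (m + 1)))).card := by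
      rw [Finset.card_product]
      simp only [Finset.card_univ, Fintype.card_perm, Fintype.card_fin]
      rw [Nat.factorial_succ]
      exact le_of_eq (by ring)
    have := Finset.surj_on_of_inj_on_of_card_le (s := (Finset.univ : Finset (Equiv.Perm (Fin m))) ×ˢ (Finset.univ : Finset (Fin (m + 1)))) (fun a _ => insP a.1 a.2)
      (fun a _ => Finset.mem_univ _)
      (fun a b _ _ hab => Prod.ext (insP_inj hab).1 (insP_inj hab).2)
      hcard σ (Finset.mem_univ σ)
    obtain ⟨a, ha, haa⟩ := this
    exact ⟨a, ha, haa.symm⟩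
  · intro a _; rfl

end Stmt4Dev
namespace Stmt4Dev

open Finset

/-! ### statistics under insertion -/

section StatIns

variable {m : ℕ} (π : Equiv.Perm (Fin m)) (p : Fin (m + 1))

lemma insP_gap (r : ℕ → ℕ → Prop) [DecidableRel r] (hm : 1 ≤ m) :
    ((Finset.Icc 1 m).filter fun i => r (permVal (insP π p) i) (permVal (insP π p) (i + 1))).card
      + ind (1 ≤ (p : ℕ) ∧ (p : ℕ) ≤ m - 1 ∧ r (permVal π p) (permVal π ((p : ℕ) + 1)))
    = ((Finset.Icc 1 (m - 1)).filter fun i => r (permVal π i) (permVal π (i + 1))).card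
      + ind (1 ≤ (p : ℕ) ∧ r (permVal π p) (m + 1))
      + ind ((p : ℕ) ≤ m - 1 ∧ r (m + 1) (permVal π ((p : ℕ) + 1))) := by
  have hple : (p : ℕ) ≤ m := by have := p.is_lt; omega
  apply gap_count r m (p : ℕ) hm hple
  · intro k hk1 hk2
    rw [permVal_insP π p hk1 (by omega), if_pos hk2]
  · rw [permVal_insP π p (by omega) (by omega), if_neg (by omega), if_pos rfl]
  · intro k hk1 hk2
    rw [permVal_insP π p (by omega) hk2, if_neg (by omega), if_neg (by omega)]

lemma desNum_insP (hm : 1 ≤ m) :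
    desNum (insP π p)
      + ind (1 ≤ (p : ℕ) ∧ (p : ℕ) ≤ m - 1 ∧ permVal π ((p : ℕ) + 1) < permVal π p)
    = desNum π + ind ((p : ℕ) ≤ m - 1) := by
  have h := insP_gap π p (fun a b => b < a) hm
  simp only [desNum, Nat.add_sub_cancel] at *
  rw [h]
  have e1 : ind (1 ≤ (p : ℕ) ∧ m + 1 < permVal π p) = 0 := by
    apply ind_neg
    rintro ⟨hp1, hp2⟩
    have := permVal_le π hp1 (by have := p.is_lt; omega)
    omega
  have e2 : ind ((p : ℕ) ≤ m - 1 ∧ permVal π ((p : ℕ) + 1) < m + 1)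
      = ind ((p : ℕ) ≤ m - 1) := by
    apply ind_congr
    constructor
    · exact fun hc => hc.1
    · intro hc
      exact ⟨hc, by have := permVal_le π (k := (p : ℕ) + 1) (by omega) (by omega); omega⟩
  rw [e1, e2]
  omega

lemma ascNum_insP (hm : 1 ≤ m) :
    ascNum (insP π p)
      + ind (1 ≤ (p : ℕ) ∧ (p : ℕ) ≤ m - 1 ∧ permVal π p < permVal π ((p : ℕ) + 1))
    = ascNum π + ind (1 ≤ (p : ℕ)) := by
  have h := insP_gap π p (fun a b => a < b) hm
  simp only [ascNum, Nat.add_sub_cancel] at *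
  rw [h]
  have e1 : ind (1 ≤ (p : ℕ) ∧ permVal π p < m + 1) = ind (1 ≤ (p : ℕ)) := by
    apply ind_congr
    constructor
    · exact fun hc => hc.1
    · intro hc
      exact ⟨hc, by have := permVal_le π hc (by have := p.is_lt; omega); omega⟩
  have e2 : ind ((p : ℕ) ≤ m - 1 ∧ m + 1 < permVal π ((p : ℕ) + 1)) = 0 := by
    apply ind_neg
    rintro ⟨hp1, hp2⟩
    have := permVal_le π (k := (p : ℕ) + 1) (by omega) (by omega)
    omega
  rw [e1, e2]
  omega

lemma bascNum_insP (hm : 1 ≤ m) :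
    bascNum (insP π p)
      + ind (1 ≤ (p : ℕ) ∧ (p : ℕ) ≤ m - 1 ∧ permVal π p + 2 ≤ permVal π ((p : ℕ) + 1))
    = bascNum π + ind (1 ≤ (p : ℕ) ∧ ¬(permVal π p = m)) := by
  have h := insP_gap π p (fun a b => a + 2 ≤ b) hm
  simp only [bascNum, Nat.add_sub_cancel] at *
  rw [h]
  have e1 : ind (1 ≤ (p : ℕ) ∧ permVal π p + 2 ≤ m + 1)
      = ind (1 ≤ (p : ℕ) ∧ ¬(permVal π p = m)) := by
    apply ind_congr
    constructor
    · rintro ⟨hc1, hc2⟩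
      exact ⟨hc1, by omega⟩
    · rintro ⟨hc1, hc2⟩
      have := permVal_le π hc1 (by have := p.is_lt; omega)
      exact ⟨hc1, by omega⟩
  have e2 : ind ((p : ℕ) ≤ m - 1 ∧ m + 1 + 2 ≤ permVal π ((p : ℕ) + 1)) = 0 := by
    apply ind_neg
    rintro ⟨hp1, hp2⟩
    have := permVal_le π (k := (p : ℕ) + 1) (by omega) (by omega)
    omega
  rw [e1, e2]
  omega

lemma sucNum_insP (hm : 1 ≤ m) :
    sucNum (insP π p)
      + ind (1 ≤ (p : ℕ) ∧ (p : ℕ) ≤ m - 1 ∧ permVal π ((p : ℕ) + 1) = permVal π p + 1)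
    = sucNum π + ind (1 ≤ (p : ℕ) ∧ permVal π p = m) := by
  have h := insP_gap π p (fun a b => b = a + 1) hm
  simp only [sucNum, Nat.add_sub_cancel] at *
  rw [h]
  have e1 : ind (1 ≤ (p : ℕ) ∧ m + 1 = permVal π p + 1)
      = ind (1 ≤ (p : ℕ) ∧ permVal π p = m) := by
    apply ind_congr
    constructor
    · rintro ⟨hc1, hc2⟩; exact ⟨hc1, by omega⟩
    · rintro ⟨hc1, hc2⟩; exact ⟨hc1, by omega⟩
  have e2 : ind ((p : ℕ) ≤ m - 1 ∧ permVal π ((p : ℕ) + 1) = m + 1 + 1) = 0 := by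
    apply ind_neg
    rintro ⟨hp1, hp2⟩
    have := permVal_le π (k := (p : ℕ) + 1) (by omega) (by omega)
    omega
  rw [e1, e2]
  omega

end StatIns

/-! ### bucket counts -/

section Buckets

variable {m : ℕ} (π : Equiv.Perm (Fin m))

/-- exactly one position carries the maximal letter -/
lemma count_max (hm : 1 ≤ m) :
    ((Icc 1 m).filter fun q => permVal π q = m).card = 1 := by
  obtain ⟨p, ⟨hp1, hp2, hp3⟩, hpu⟩ := exists_max_pos hm π
  rw [Finset.card_eq_one]
  refine ⟨p, ?_⟩
  ext q
  simp only [Finset.mem_filter, mem_Icc, Finset.mem_singleton]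
  constructor
  · rintro ⟨⟨hq1, hq2⟩, hq3⟩
    exact hpu q hq1 hq2 hq3
  · rintro rfl
    exact ⟨⟨hp1, hp2⟩, hp3⟩

/-- the descent-or-endpoint positions: `d + 1` of them -/
lemma count_desD (hm : 1 ≤ m) :
    ((Icc 1 m).filter fun q => permVal π (q + 1) < permVal π q).card = desNum π + 1 := by
  have hsplit : ((Icc 1 m).filter fun q => permVal π (q + 1) < permVal π q)
      = insert m ((Icc 1 (m - 1)).filter fun q => permVal π (q + 1) < permVal π q) := by
    ext q
    simp only [Finset.mem_filter, mem_Icc, Finset.mem_insert]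
    constructor
    · rintro ⟨⟨hq1, hq2⟩, hq3⟩
      rcases Nat.eq_or_lt_of_le hq2 with h | h
      · exact Or.inl h
      · exact Or.inr ⟨⟨hq1, by omega⟩, hq3⟩
    · rintro (rfl | ⟨⟨hq1, hq2⟩, hq3⟩)
      · refine ⟨⟨hm, le_rfl⟩, ?_⟩
        rw [permVal_out π (Or.inr (by omega))]
        exact permVal_ge π hm le_rfl
      · exact ⟨⟨hq1, by omega⟩, hq3⟩
  rw [hsplit, Finset.card_insert_of_notMem (by
    simp only [Finset.mem_filter, mem_Icc]
    rintro ⟨⟨_, h⟩, _⟩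
    omega), desNum]

/-- positions with a descent gap but not carrying the max: `d` of them -/
lemma count_des_notmax (hm : 1 ≤ m) :
    ((Icc 1 m).filter fun q => ¬(permVal π q = m) ∧ permVal π (q + 1) < permVal π q).card
      = desNum π := by
  classical
  have h1 : ((Icc 1 m).filter fun q => permVal π q = m ∧ permVal π (q + 1) < permVal π q)
      = (Icc 1 m).filter fun q => permVal π q = m := by
    apply Finset.filter_congr
    intro q hq
    simp only [mem_Icc] at hq
    simp only [and_iff_left_iff_imp]
    intro hq3
    rcases Nat.lt_or_ge m (q + 1) with h | h
    · rw [permVal_out π (Or.inr h)]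
      omega
    · have := permVal_le π (k := q + 1) (by omega) h
      have hne : permVal π (q + 1) ≠ permVal π q := by
        intro hc
        have := permVal_inj π (k := q + 1) (l := q) (by omega) h hq.1 hq.2 hc
        omega
      omega
  have h2 : ((Icc 1 m).filter fun q => permVal π (q + 1) < permVal π q).card
      = ((Icc 1 m).filter fun q => permVal π q = m ∧ permVal π (q + 1) < permVal π q).card
      + ((Icc 1 m).filter fun q => ¬(permVal π q = m) ∧ permVal π (q + 1) < permVal π q).card := by
    rw [Finset.card_filter, Finset.card_filter, Finset.card_filter, ← Finset.sum_add_distrib]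
    apply Finset.sum_congr rfl
    intro q _
    by_cases ha : permVal π q = m <;> by_cases hb : permVal π (q + 1) < permVal π q <;>
      simp [ha, hb]
  rw [count_desD π hm, h1, count_max π hm] at h2
  omega

/-- non-descent positions make ascents of the suppressed word: `a` of them -/
lemma count_notdes (hm : 1 ≤ m) :
    ((Icc 1 m).filter fun q => ¬(permVal π (q + 1) < permVal π q)).card = ascNum π := by
  have hsplit : ((Icc 1 m).filter fun q => ¬(permVal π (q + 1) < permVal π q))
      = (Icc 1 (m - 1)).filter fun q => permVal π q < permVal π (q + 1) := by
    ext q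
    simp only [Finset.mem_filter, mem_Icc]
    constructor
    · rintro ⟨⟨hq1, hq2⟩, hq3⟩
      have hqm : q ≠ m := by
        intro rfl'
        subst rfl'
        rw [permVal_out π (Or.inr (by omega))] at hq3
        have := permVal_ge π hq1 hq2
        omega
      have hle : q + 1 ≤ m := by omega
      have hne : permVal π (q + 1) ≠ permVal π q := by
        intro hc
        have := permVal_inj π (k := q + 1) (l := q) (by omega) hle hq1 hq2 hc
        omega
      exact ⟨⟨hq1, by omega⟩, by omega⟩
    · rintro ⟨⟨hq1, hq2⟩, hq3⟩
      exact ⟨⟨hq1, by omega⟩, by omega⟩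
  rw [hsplit, ascNum]

/-- succession positions -/
lemma count_suc (hm : 1 ≤ m) :
    ((Icc 1 m).filter fun q => ¬(permVal π q = m) ∧ ¬(permVal π (q + 1) < permVal π q)
        ∧ permVal π (q + 1) = permVal π q + 1).card = sucNum π := by
  have hsplit : ((Icc 1 m).filter fun q => ¬(permVal π q = m) ∧ ¬(permVal π (q + 1) < permVal π q)
        ∧ permVal π (q + 1) = permVal π q + 1)
      = (Icc 1 (m - 1)).filter fun q => permVal π (q + 1) = permVal π q + 1 := by
    ext q
    simp only [Finset.mem_filter, mem_Icc]
    constructor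
    · rintro ⟨⟨hq1, hq2⟩, hq3, hq4, hq5⟩
      have hqm : q ≠ m := by
        intro rfl'
        subst rfl'
        rw [permVal_out π (Or.inr (by omega))] at hq5
        omega
      exact ⟨⟨hq1, by omega⟩, hq5⟩
    · rintro ⟨⟨hq1, hq2⟩, hq3⟩
      have hle : q + 1 ≤ m := by omega
      have h5 := permVal_le π (k := q + 1) (by omega) hle
      refine ⟨⟨hq1, by omega⟩, by omega, by omega, hq3⟩
  rw [hsplit, sucNum]

/-- big-ascent positions -/
lemma count_basc (hm : 1 ≤ m) :
    ((Icc 1 m).filter fun q => ¬(permVal π q = m) ∧ ¬(permVal π (q + 1) < permVal π q)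
        ∧ ¬(permVal π (q + 1) = permVal π q + 1)).card = bascNum π := by
  have hsplit : ((Icc 1 m).filter fun q => ¬(permVal π q = m) ∧ ¬(permVal π (q + 1) < permVal π q)
        ∧ ¬(permVal π (q + 1) = permVal π q + 1))
      = (Icc 1 (m - 1)).filter fun q => permVal π q + 2 ≤ permVal π (q + 1) := by
    ext q
    simp only [Finset.mem_filter, mem_Icc]
    constructor
    · rintro ⟨⟨hq1, hq2⟩, hq3, hq4, hq5⟩
      have hqm : q ≠ m := by
        intro rfl'
        subst rfl'
        rw [permVal_out π (Or.inr (by omega))] at hq4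
        have := permVal_ge π hq1 hq2
        omega
      have hle : q + 1 ≤ m := by omega
      have hne : permVal π (q + 1) ≠ permVal π q := by
        intro hc
        have := permVal_inj π (k := q + 1) (l := q) (by omega) hle hq1 hq2 hc
        omega
      exact ⟨⟨hq1, by omega⟩, by omega⟩
    · rintro ⟨⟨hq1, hq2⟩, hq3⟩
      have hle : q + 1 ≤ m := by omega
      have h5 := permVal_le π (k := q + 1) (by omega) hle
      have h6 := permVal_le π hq1 (by omega)
      refine ⟨⟨hq1, by omega⟩, by omega, by omega, by omega⟩
  rw [hsplit, bascNum]

end Buckets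

end Stmt4Dev
namespace Stmt4Dev

open Finset

/-! ### cycle insertion of a maximal letter -/

/-- if `q < m`: set `σ(q) = m+1`, `σ(m+1) = π(q)`; if `q = m` (i.e. `q` is the last index),
extend `π` by the fixed point `m+1`. (0-based indices) -/
def cinsF {m : ℕ} (π : Equiv.Perm (Fin m)) (q : Fin (m + 1)) (j : Fin (m + 1)) : Fin (m + 1) :=
  if h0 : (j : ℕ) = (q : ℕ) then Fin.last m
  else if h1 : (j : ℕ) = m then (π ⟨(q : ℕ), by have := q.is_lt; omega⟩).castSucc
  else (π ⟨(j : ℕ), by have := j.is_lt; omega⟩).castSucc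

lemma cinsF_injective {m : ℕ} (π : Equiv.Perm (Fin m)) (q : Fin (m + 1)) :
    Function.Injective (cinsF π q) := by
  intro a b hab
  unfold cinsF at hab
  have hlast : ∀ x : Fin m, x.castSucc ≠ Fin.last m := fun x => (Fin.castSucc_lt_last x).ne
  split_ifs at hab with h1 h2 h3 h4 h5
  all_goals first
  | exact absurd hab (hlast _)
  | exact absurd hab.symm (hlast _)
  | exact Fin.ext (by omega)
  | (have h7 := π.injective (Fin.castSucc_injective m hab)
     simp only [Fin.mk.injEq] at h7
     exact Fin.ext (by omega))

def cinsP {m : ℕ} (π : Equiv.Perm (Fin m)) (q : Fin (m + 1)) : Equiv.Perm (Fin (m + 1)) :=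
  Equiv.ofBijective _ (Finite.injective_iff_bijective.mp (cinsF_injective π q))

lemma cinsP_apply {m : ℕ} (π : Equiv.Perm (Fin m)) (q : Fin (m + 1)) (j : Fin (m + 1)) :
    cinsP π q j = cinsF π q j := rfl

lemma permVal_cinsP {m : ℕ} (π : Equiv.Perm (Fin m)) (q : Fin (m + 1)) {k : ℕ}
    (h1 : 1 ≤ k) (h2 : k ≤ m + 1) :
    permVal (cinsP π q) k =
      if k = (q : ℕ) + 1 then m + 1
      else if k = m + 1 then permVal π ((q : ℕ) + 1)
      else permVal π k := by
  rw [permVal_of _ h1 h2, cinsP_apply]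
  unfold cinsF
  by_cases hq : k = (q : ℕ) + 1
  · rw [dif_pos (by simp; omega), if_pos hq]
    simp [Fin.last]
  · rw [dif_neg (by simp; omega), if_neg hq]
    by_cases hm : k = m + 1
    · have hqm : (q : ℕ) < m := by have := q.is_lt; omega
      rw [dif_pos (by simp; omega), if_pos hm, permVal_of π (by omega) (by omega)]
      simp
    · rw [dif_neg (by simp; omega), if_neg hm, permVal_of π h1 (by omega)]
      simp

lemma cinsP_inj {m : ℕ} {π π' : Equiv.Perm (Fin m)} {q q' : Fin (m + 1)}
    (h : cinsP π q = cinsP π' q') : π = π' ∧ q = q' := by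
  have hq : q = q' := by
    have h1 : cinsP π q q = Fin.last m := by
      rw [cinsP_apply]; unfold cinsF; rw [dif_pos rfl]
    have h2 : cinsP π' q' q' = Fin.last m := by
      rw [cinsP_apply]; unfold cinsF; rw [dif_pos rfl]
    rw [h] at h1
    exact (cinsP π' q').injective (h1.trans h2.symm)
  refine ⟨?_, hq⟩
  subst hq
  apply permVal_ext
  intro k hk1 hk2
  by_cases hkq : k = (q : ℕ) + 1
  · -- both values are permVal at position m+1
    have e1 := permVal_cinsP π q (k := m + 1) (by omega) (by omega)
    have e2 := permVal_cinsP π' q (k := m + 1) (by omega) (by omega)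
    by_cases hqm : (q : ℕ) + 1 = m + 1
    · -- q = m: all other positions agree
      -- use positions k' ≠ q+1 directly; but here k = q+1 = m+1 > m contradicts k ≤ m
      omega
    · rw [if_neg (by omega), if_pos rfl] at e1 e2
      rw [← hkq] at e1 e2
      rw [← e1, ← e2, h]
  · have e1 := permVal_cinsP π q (k := k) hk1 (by omega)
    have e2 := permVal_cinsP π' q (k := k) hk1 (by omega)
    rw [if_neg hkq, if_neg (by omega)] at e1 e2
    rw [← e1, ← e2, h]

lemma sum_cinsP {m : ℕ} {β : Type*} [AddCommMonoid β] (F : Equiv.Perm (Fin (m + 1)) → β) :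
    ∑ σ : Equiv.Perm (Fin (m + 1)), F σ
      = ∑ π : Equiv.Perm (Fin m), ∑ q : Fin (m + 1), F (cinsP π q) := by
  rw [← Finset.sum_product']
  symm
  apply Finset.sum_bij (fun a _ => cinsP a.1 a.2)
  · intro a _; exact Finset.mem_univ _
  · intro a _ b _ hab
    have := cinsP_inj hab
    exact Prod.ext this.1 this.2
  · intro σ _
    have hcard : (Finset.univ : Finset (Equiv.Perm (Fin (m + 1)))).card
        ≤ ((Finset.univ : Finset (Equiv.Perm (Fin m))) ×ˢ (Finset.univ : Finset (Fin (m + 1)))).card := by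
      rw [Finset.card_product]
      simp only [Finset.card_univ, Fintype.card_perm, Fintype.card_fin]
      rw [Nat.factorial_succ]
      exact le_of_eq (by ring)
    have := Finset.surj_on_of_inj_on_of_card_le (s := (Finset.univ : Finset (Equiv.Perm (Fin m))) ×ˢ (Finset.univ : Finset (Fin (m + 1)))) (fun a _ => cinsP a.1 a.2)
      (fun a _ => Finset.mem_univ _)
      (fun a b _ _ hab => Prod.ext (cinsP_inj hab).1 (cinsP_inj hab).2)
      hcard σ (Finset.mem_univ σ)
    obtain ⟨a, ha, haa⟩ := this
    exact ⟨a, ha, haa.symm⟩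
  · intro a _; rfl

/-! ### statistics under cycle insertion -/

section StatCins

variable {m : ℕ} (π : Equiv.Perm (Fin m)) (q : Fin (m + 1))

lemma cinsP_point (r : ℕ → ℕ → Prop) [DecidableRel r] (hq : (q : ℕ) < m) :
    ((Icc 1 (m + 1)).filter fun i => r i (permVal (cinsP π q) i)).card
        + ind (r ((q : ℕ) + 1) (permVal π ((q : ℕ) + 1)))
    = ((Icc 1 m).filter fun i => r i (permVal π i)).card
        + ind (r ((q : ℕ) + 1) (m + 1)) + ind (r (m + 1) (permVal π ((q : ℕ) + 1))) := by
  apply point_count r m (permVal π) (permVal (cinsP π q)) ((q : ℕ) + 1) (by omega) (by omega)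
  · intro k hk1 hk2 hk3
    rw [permVal_cinsP π q hk1 (by omega), if_neg hk3, if_neg (by omega)]
  · rw [permVal_cinsP π q (by omega) (by omega), if_pos rfl]
  · rw [permVal_cinsP π q (by omega) (by omega), if_neg (by omega), if_pos rfl]

lemma cinsP_point_ext (r : ℕ → ℕ → Prop) [DecidableRel r] (hq : (q : ℕ) = m) :
    ((Icc 1 (m + 1)).filter fun i => r i (permVal (cinsP π q) i)).card
    = ((Icc 1 m).filter fun i => r i (permVal π i)).card + ind (r (m + 1) (m + 1)) := by
  apply point_count_ext r m (permVal π) (permVal (cinsP π q))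
  · intro k hk1 hk2
    rw [permVal_cinsP π q hk1 (by omega), if_neg (by omega), if_neg (by omega)]
  · rw [permVal_cinsP π q (by omega) (by omega), if_pos (by omega)]

lemma excNum_cinsP (hq : (q : ℕ) < m) :
    excNum (cinsP π q) + ind ((q : ℕ) + 1 < permVal π ((q : ℕ) + 1))
      = excNum π + 1 := by
  have h := cinsP_point π q (fun a b => a < b) hq
  simp only [excNum] at *
  rw [h, ind_pos (by omega : (q : ℕ) + 1 < m + 1),
    ind_neg (by have := permVal_le π (k := (q : ℕ) + 1) (by omega) (by omega); omega
      : ¬(m + 1 < permVal π ((q : ℕ) + 1)))]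

lemma aexcNum_cinsP (hq : (q : ℕ) < m) :
    aexcNum (cinsP π q) + ind (permVal π ((q : ℕ) + 1) < (q : ℕ) + 1)
      = aexcNum π + 1 := by
  have h := cinsP_point π q (fun a b => b < a) hq
  simp only [aexcNum] at *
  rw [h, ind_neg (by omega : ¬(m + 1 < (q : ℕ) + 1)),
    ind_pos (by have := permVal_le π (k := (q : ℕ) + 1) (by omega) (by omega); omega
      : permVal π ((q : ℕ) + 1) < m + 1)]

lemma fixNum_cinsP (hq : (q : ℕ) < m) :
    fixNum (cinsP π q) + ind (permVal π ((q : ℕ) + 1) = (q : ℕ) + 1)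
      = fixNum π := by
  have h := cinsP_point π q (fun a b => b = a) hq
  simp only [fixNum] at *
  rw [h, ind_neg (by omega : ¬(m + 1 = (q : ℕ) + 1)),
    ind_neg (by have := permVal_le π (k := (q : ℕ) + 1) (by omega) (by omega); omega
      : ¬(permVal π ((q : ℕ) + 1) = m + 1))]
  omega

lemma excNum_cinsP_ext (hq : (q : ℕ) = m) : excNum (cinsP π q) = excNum π := by
  have h := cinsP_point_ext π q (fun a b => a < b) hq
  simp only [excNum] at *
  rw [h, ind_neg (by omega : ¬(m + 1 < m + 1))]
  omega

lemma aexcNum_cinsP_ext (hq : (q : ℕ) = m) : aexcNum (cinsP π q) = aexcNum π := by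
  have h := cinsP_point_ext π q (fun a b => b < a) hq
  simp only [aexcNum] at *
  rw [h, ind_neg (by omega : ¬(m + 1 < m + 1))]
  omega

lemma fixNum_cinsP_ext (hq : (q : ℕ) = m) : fixNum (cinsP π q) = fixNum π + 1 := by
  have h := cinsP_point_ext π q (fun a b => b = a) hq
  simp only [fixNum] at *
  rw [h]
  simp [ind]

end StatCins

/-! ### point-bucket counts -/

section PBuckets

variable {m : ℕ} (π : Equiv.Perm (Fin m))

lemma count_exc :
    ((Icc 1 m).filter fun t => t < permVal π t).card = excNum π := rfl

lemma count_aexc :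
    ((Icc 1 m).filter fun t => ¬(t < permVal π t) ∧ permVal π t < t).card = aexcNum π := by
  rw [aexcNum]
  congr 1
  apply Finset.filter_congr
  intro t _
  constructor
  · exact fun hc => hc.2
  · exact fun hc => ⟨by omega, hc⟩

lemma count_fix :
    ((Icc 1 m).filter fun t => ¬(t < permVal π t) ∧ ¬(permVal π t < t)).card = fixNum π := by
  rw [fixNum]
  congr 1
  apply Finset.filter_congr
  intro t _
  constructor
  · exact fun hc => by omega
  · exact fun hc => by omega

end PBuckets

end Stmt4Dev
namespace Stmt4Dev

open Finset MvPolynomial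

/-! ### the polynomial ring and the operator `D` -/

abbrev R3 : Type := MvPolynomial (Fin 3) ℝ

/-- the basic monomial -/
noncomputable def W3 (b d u : ℕ) : R3 := X 0 ^ b * X 1 ^ d * X 2 ^ u

/-- the derivation `∂x + ∂y + ∂s` -/
noncomputable def DD (f : R3) : R3 := pderiv 0 f + pderiv 1 f + pderiv 2 f

lemma DD_sum {α : Type*} (s : Finset α) (f : α → R3) :
    DD (∑ a ∈ s, f a) = ∑ a ∈ s, DD (f a) := by
  unfold DD
  rw [map_sum, map_sum, map_sum, ← Finset.sum_add_distrib, ← Finset.sum_add_distrib]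

lemma DD_mul (f g : R3) : DD (f * g) = DD f * g + f * DD g := by
  unfold DD
  simp only [pderiv_mul]
  ring

/-- `X 0 * X 1 * D` applied to a monomial -/
lemma DD_W3 (b d u : ℕ) :
    X 0 * X 1 * DD (W3 b d u)
      = b • W3 b (d + 1) u + d • W3 (b + 1) d u + u • W3 (b + 1) (d + 1) (u - 1) := by
  have h0 : pderiv (0 : Fin 3) (W3 b d u) = (b : R3) * (X 0 ^ (b - 1) * X 1 ^ d * X 2 ^ u) := by
    unfold W3
    simp only [pderiv_mul, pderiv_pow, pderiv_X_self, pderiv_X_of_ne (by decide : (1 : Fin 3) ≠ 0),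
      pderiv_X_of_ne (by decide : (2 : Fin 3) ≠ 0)]
    ring
  have h1 : pderiv (1 : Fin 3) (W3 b d u) = (d : R3) * (X 0 ^ b * X 1 ^ (d - 1) * X 2 ^ u) := by
    unfold W3
    simp only [pderiv_mul, pderiv_pow, pderiv_X_self, pderiv_X_of_ne (by decide : (0 : Fin 3) ≠ 1),
      pderiv_X_of_ne (by decide : (2 : Fin 3) ≠ 1)]
    ring
  have h2 : pderiv (2 : Fin 3) (W3 b d u) = (u : R3) * (X 0 ^ b * X 1 ^ d * X 2 ^ (u - 1)) := by
    unfold W3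
    simp only [pderiv_mul, pderiv_pow, pderiv_X_self, pderiv_X_of_ne (by decide : (0 : Fin 3) ≠ 2),
      pderiv_X_of_ne (by decide : (1 : Fin 3) ≠ 2)]
    ring
  unfold DD
  rw [h0, h1, h2]
  have e0 : (X 0 : R3) * X 1 * ((b : R3) * (X 0 ^ (b - 1) * X 1 ^ d * X 2 ^ u))
      = b • W3 b (d + 1) u := by
    cases b with
    | zero => simp
    | succ k =>
      simp only [Nat.add_sub_cancel, nsmul_eq_mul, W3]
      push_cast
      ring
  have e1 : (X 0 : R3) * X 1 * ((d : R3) * (X 0 ^ b * X 1 ^ (d - 1) * X 2 ^ u))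
      = d • W3 (b + 1) d u := by
    cases d with
    | zero => simp
    | succ k =>
      simp only [Nat.add_sub_cancel, nsmul_eq_mul, W3]
      push_cast
      ring
  have e2 : (X 0 : R3) * X 1 * ((u : R3) * (X 0 ^ b * X 1 ^ d * X 2 ^ (u - 1)))
      = u • W3 (b + 1) (d + 1) (u - 1) := by
    cases u with
    | zero => simp
    | succ k =>
      simp only [Nat.add_sub_cancel, nsmul_eq_mul, W3]
      push_cast
      ring
  rw [mul_add, mul_add, e0, e1, e2]

lemma W3_d_succ (b d u : ℕ) : W3 b (d + 1) u = X 1 * W3 b d u := by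
  unfold W3; ring

lemma W3_b_succ (b d u : ℕ) : W3 (b + 1) d u = X 0 * W3 b d u := by
  unfold W3; ring

lemma W3_u_succ (b d u : ℕ) : W3 b d (u + 1) = X 2 * W3 b d u := by
  unfold W3; ring

lemma W3_zero : W3 0 0 0 = 1 := by unfold W3; simp

/-! ### the three polynomial families -/

/-- `Σ_π x^basc y^des s^suc` -/
noncomputable def PA (m : ℕ) : R3 :=
  ∑ π : Equiv.Perm (Fin m), W3 (bascNum π) (desNum π) (sucNum π)

/-- `Σ_τ x^asc y^(des+1)` for `m ≥ 1`, `1` for `m = 0` -/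
noncomputable def PT (m : ℕ) : R3 :=
  if m = 0 then 1 else ∑ τ : Equiv.Perm (Fin m), W3 (ascNum τ) (desNum τ + 1) 0

/-- `Σ_ρ x^exc y^aexc s^fix` -/
noncomputable def PD (m : ℕ) : R3 :=
  ∑ ρ : Equiv.Perm (Fin m), W3 (excNum ρ) (aexcNum ρ) (fixNum ρ)

end Stmt4Dev
namespace Stmt4Dev

open Finset MvPolynomial

/-! ### recurrence for `PD` -/

lemma sum_range_shift {β : Type*} [AddCommMonoid β] (m : ℕ) (g : ℕ → β) :
    ∑ j ∈ Finset.range m, g (j + 1) = ∑ t ∈ Icc 1 m, g t := by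
  apply Finset.sum_nbij' (fun j => j + 1) (fun t => t - 1)
  · intro x hx; simp only [Finset.mem_range, mem_Icc] at *; omega
  · intro x hx; simp only [Finset.mem_range, mem_Icc] at *; omega
  · intro x hx; simp only [Finset.mem_range, mem_Icc] at *; omega
  · intro x hx; simp only [Finset.mem_range, mem_Icc] at *; omega
  · intro x hx; rfl

lemma inner_RD {m : ℕ} (π : Equiv.Perm (Fin m)) :
    ∑ q : Fin (m + 1), W3 (excNum (cinsP π q)) (aexcNum (cinsP π q)) (fixNum (cinsP π q))
      = X 2 * W3 (excNum π) (aexcNum π) (fixNum π)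
        + X 0 * X 1 * DD (W3 (excNum π) (aexcNum π) (fixNum π)) := by
  classical
  set e := excNum π
  set ae := aexcNum π
  set f := fixNum π
  set T : ℕ → R3 := fun t =>
    if t < permVal π t then W3 e (ae + 1) f
    else if permVal π t < t then W3 (e + 1) ae f
    else W3 (e + 1) (ae + 1) (f - 1) with hT
  rw [Fin.sum_univ_castSucc]
  have hlast : W3 (excNum (cinsP π (Fin.last m))) (aexcNum (cinsP π (Fin.last m)))
      (fixNum (cinsP π (Fin.last m))) = X 2 * W3 e ae f := by
    rw [excNum_cinsP_ext π _ (by simp), aexcNum_cinsP_ext π _ (by simp),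
      fixNum_cinsP_ext π _ (by simp), ← W3_u_succ]
  have hterm : ∀ i : Fin m,
      W3 (excNum (cinsP π i.castSucc)) (aexcNum (cinsP π i.castSucc))
        (fixNum (cinsP π i.castSucc)) = T ((i : ℕ) + 1) := by
    intro i
    have hq : ((i.castSucc : Fin (m + 1)) : ℕ) < m := by simp
    have he := excNum_cinsP π i.castSucc hq
    have ha := aexcNum_cinsP π i.castSucc hq
    have hf := fixNum_cinsP π i.castSucc hq
    simp only [Fin.coe_castSucc] at he ha hf
    simp only [hT]
    rcases Nat.lt_trichotomy ((i : ℕ) + 1) (permVal π ((i : ℕ) + 1)) with hc | hc | hc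
    · rw [if_pos hc]
      rw [ind_pos hc] at he
      rw [ind_neg (by omega)] at ha hf
      congr 1 <;> omega
    · rw [if_neg (by omega), if_neg (by omega)]
      rw [ind_neg (by omega)] at he ha
      rw [ind_pos hc.symm] at hf
      congr 1 <;> omega
    · rw [if_neg (by omega), if_pos hc]
      rw [ind_neg (by omega)] at he hf
      rw [ind_pos hc] at ha
      congr 1 <;> omega
  rw [Finset.sum_congr rfl (fun i _ => hterm i), hlast]
  have hsum : ∑ i : Fin m, T ((i : ℕ) + 1) = ∑ t ∈ Icc 1 m, T t := by
    rw [Fin.sum_univ_eq_sum_range (fun j => T (j + 1)) m, sum_range_shift]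
  rw [hsum]
  have hbuckets : ∑ t ∈ Icc 1 m, T t
      = e • W3 e (ae + 1) f + ae • W3 (e + 1) ae f + f • W3 (e + 1) (ae + 1) (f - 1) := by
    simp only [hT]
    rw [Finset.sum_ite, Finset.sum_ite]
    rw [Finset.sum_const, Finset.sum_const, Finset.sum_const]
    rw [Finset.filter_filter, Finset.filter_filter]
    rw [count_exc π, count_aexc π, count_fix π]
    ring
  rw [hbuckets, DD_W3]
  ring

lemma RD (m : ℕ) : PD (m + 1) = X 2 * PD m + X 0 * X 1 * DD (PD m) := by
  unfold PD
  rw [sum_cinsP (fun σ => W3 (excNum σ) (aexcNum σ) (fixNum σ))]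
  rw [Finset.sum_congr rfl (fun π _ => inner_RD π)]
  rw [Finset.sum_add_distrib, ← Finset.mul_sum, ← Finset.mul_sum, ← DD_sum]

end Stmt4Dev
namespace Stmt4Dev

open Finset MvPolynomial

/-! ### recurrence for `PA` -/

lemma inner_RA {m : ℕ} (hm : 1 ≤ m) (π : Equiv.Perm (Fin m)) :
    ∑ p : Fin (m + 1), W3 (bascNum (insP π p)) (desNum (insP π p)) (sucNum (insP π p))
      = (X 2 + X 1) * W3 (bascNum π) (desNum π) (sucNum π)
        + X 0 * X 1 * DD (W3 (bascNum π) (desNum π) (sucNum π)) := by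
  classical
  set b := bascNum π with hb
  set d := desNum π with hd
  set u := sucNum π with hu
  set T : ℕ → R3 := fun t =>
    if permVal π t = m then W3 b d (u + 1)
    else if permVal π (t + 1) < permVal π t then W3 (b + 1) d u
    else if permVal π (t + 1) = permVal π t + 1 then W3 (b + 1) (d + 1) (u - 1)
    else W3 b (d + 1) u with hT
  rw [Fin.sum_univ_succ]
  have hzero : W3 (bascNum (insP π 0)) (desNum (insP π 0)) (sucNum (insP π 0))
      = W3 b (d + 1) u := by
    have hB := bascNum_insP π 0 hm
    have hD := desNum_insP π 0 hm
    have hU := sucNum_insP π 0 hm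
    simp only [Fin.val_zero] at hB hD hU
    rw [ind_neg (by omega), ind_neg (fun hc => absurd hc.1 (by omega))] at hB
    rw [ind_neg (fun hc => absurd hc.1 (by omega)), ind_pos (by omega : (0 : ℕ) ≤ m - 1)] at hD
    rw [ind_neg (fun hc => absurd hc.1 (by omega)), ind_neg (fun hc => absurd hc.1 (by omega))] at hU
    congr 1 <;> omega
  have hterm : ∀ i : Fin m,
      W3 (bascNum (insP π i.succ)) (desNum (insP π i.succ)) (sucNum (insP π i.succ))
        = T ((i : ℕ) + 1) := by
    intro i
    have hip : ((i.succ : Fin (m + 1)) : ℕ) = (i : ℕ) + 1 := by simp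
    set t := (i : ℕ) + 1 with hts
    have ht1 : 1 ≤ t := by omega
    have ht2 : t ≤ m := by have := i.is_lt; omega
    have hB := bascNum_insP π i.succ hm
    have hD := desNum_insP π i.succ hm
    have hU := sucNum_insP π i.succ hm
    rw [hip] at hB hD hU
    have hwle : permVal π t ≤ m := permVal_le π ht1 ht2
    have hwge : 1 ≤ permVal π t := permVal_ge π ht1 ht2
    simp only [hT]
    by_cases hA : permVal π t = m
    · rw [if_pos hA]
      -- gap cannot be a big ascent or a succession; it is a descent unless t = m
      have hnb : ¬(1 ≤ t ∧ t ≤ m - 1 ∧ permVal π t + 2 ≤ permVal π (t + 1)) := by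
        rintro ⟨_, hc2, hc3⟩
        have := permVal_le π (k := t + 1) (by omega) (by omega)
        omega
      have hns : ¬(1 ≤ t ∧ t ≤ m - 1 ∧ permVal π (t + 1) = permVal π t + 1) := by
        rintro ⟨_, hc2, hc3⟩
        have := permVal_le π (k := t + 1) (by omega) (by omega)
        omega
      rw [ind_neg hnb, ind_neg (show ¬(1 ≤ t ∧ ¬(permVal π t = m)) from
        fun hc => absurd hA hc.2)] at hB
      rw [ind_neg hns, ind_pos (show 1 ≤ t ∧ permVal π t = m from ⟨ht1, hA⟩)] at hU
      by_cases htm : t ≤ m - 1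
      · have hne : permVal π (t + 1) ≠ permVal π t := fun hc =>
          absurd (permVal_inj π (by omega) (by omega) ht1 ht2 hc) (by omega)
        have hlt : permVal π (t + 1) < permVal π t := by
          have := permVal_le π (k := t + 1) (by omega) (by omega)
          omega
        rw [ind_pos (show 1 ≤ t ∧ t ≤ m - 1 ∧ permVal π (t + 1) < permVal π t from
          ⟨ht1, htm, hlt⟩), ind_pos htm] at hD
        congr 1 <;> omega
      · rw [ind_neg (show ¬(1 ≤ t ∧ t ≤ m - 1 ∧ permVal π (t + 1) < permVal π t) from
          fun hc => absurd hc.2.1 htm), ind_neg htm] at hD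
        congr 1 <;> omega
    · rw [if_neg hA]
      rw [ind_neg (show ¬(1 ≤ t ∧ permVal π t = m) from fun hc => absurd hc.2 hA)] at hU
      by_cases hDes : permVal π (t + 1) < permVal π t
      · rw [if_pos hDes]
        have hnb : ¬(1 ≤ t ∧ t ≤ m - 1 ∧ permVal π t + 2 ≤ permVal π (t + 1)) := by
          rintro ⟨_, _, hc3⟩; omega
        have hns : ¬(1 ≤ t ∧ t ≤ m - 1 ∧ permVal π (t + 1) = permVal π t + 1) := by
          rintro ⟨_, _, hc3⟩; omega
        rw [ind_neg hnb, ind_pos (show 1 ≤ t ∧ ¬(permVal π t = m) from ⟨ht1, hA⟩)] at hB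
        rw [ind_neg hns] at hU
        by_cases htm : t ≤ m - 1
        · rw [ind_pos (show 1 ≤ t ∧ t ≤ m - 1 ∧ permVal π (t + 1) < permVal π t from
            ⟨ht1, htm, hDes⟩), ind_pos htm] at hD
          congr 1 <;> omega
        · rw [ind_neg (show ¬(1 ≤ t ∧ t ≤ m - 1 ∧ permVal π (t + 1) < permVal π t) from
            fun hc => absurd hc.2.1 htm), ind_neg htm] at hD
          congr 1 <;> omega
      · rw [if_neg hDes]
        -- not a descent; in particular `t ≤ m - 1`
        have htm : t ≤ m - 1 := by
          by_contra htm
          have : t = m := by omega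
          have : permVal π (t + 1) = 0 := permVal_out π (Or.inr (by omega))
          omega
        have hne : permVal π (t + 1) ≠ permVal π t := fun hc =>
          absurd (permVal_inj π (by omega) (by omega) ht1 ht2 hc) (by omega)
        have hgt : permVal π t < permVal π (t + 1) := by omega
        rw [ind_neg (show ¬(1 ≤ t ∧ t ≤ m - 1 ∧ permVal π (t + 1) < permVal π t) from
          fun hc => absurd hc.2.2 hDes), ind_pos htm] at hD
        by_cases hS : permVal π (t + 1) = permVal π t + 1
        · rw [if_pos hS]
          have hnb : ¬(1 ≤ t ∧ t ≤ m - 1 ∧ permVal π t + 2 ≤ permVal π (t + 1)) := by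
            rintro ⟨_, _, hc3⟩; omega
          rw [ind_neg hnb, ind_pos (show 1 ≤ t ∧ ¬(permVal π t = m) from ⟨ht1, hA⟩)] at hB
          rw [ind_pos (show 1 ≤ t ∧ t ≤ m - 1 ∧ permVal π (t + 1) = permVal π t + 1 from
            ⟨ht1, htm, hS⟩)] at hU
          have hu1 : 1 ≤ u := by omega
          congr 1 <;> omega
        · rw [if_neg hS]
          have hbig : permVal π t + 2 ≤ permVal π (t + 1) := by omega
          rw [ind_pos (show 1 ≤ t ∧ t ≤ m - 1 ∧ permVal π t + 2 ≤ permVal π (t + 1) from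
            ⟨ht1, htm, hbig⟩), ind_pos (show 1 ≤ t ∧ ¬(permVal π t = m) from ⟨ht1, hA⟩)] at hB
          rw [ind_neg (show ¬(1 ≤ t ∧ t ≤ m - 1 ∧ permVal π (t + 1) = permVal π t + 1) from
            fun hc => absurd hc.2.2 hS)] at hU
          congr 1 <;> omega
  rw [Finset.sum_congr rfl (fun i _ => hterm i), hzero]
  have hsum : ∑ i : Fin m, T ((i : ℕ) + 1) = ∑ t ∈ Icc 1 m, T t := by
    rw [Fin.sum_univ_eq_sum_range (fun j => T (j + 1)) m, sum_range_shift]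
  rw [hsum]
  have hbuckets : ∑ t ∈ Icc 1 m, T t
      = 1 • W3 b d (u + 1) + d • W3 (b + 1) d u + u • W3 (b + 1) (d + 1) (u - 1)
        + b • W3 b (d + 1) u := by
    simp only [hT]
    rw [Finset.sum_ite, Finset.sum_ite, Finset.sum_ite]
    rw [Finset.sum_const, Finset.sum_const, Finset.sum_const, Finset.sum_const]
    simp only [Finset.filter_filter, and_assoc]
    rw [count_max π hm, count_des_notmax π hm, count_suc π hm, count_basc π hm]
    ring
  rw [hbuckets, DD_W3]
  rw [W3_u_succ, W3_d_succ, W3_b_succ]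
  simp only [nsmul_eq_mul, one_mul]
  ring

lemma RA (m : ℕ) (hm : 1 ≤ m) :
    PA (m + 1) = (X 2 + X 1) * PA m + X 0 * X 1 * DD (PA m) := by
  unfold PA
  rw [sum_insP (fun σ => W3 (bascNum σ) (desNum σ) (sucNum σ))]
  rw [Finset.sum_congr rfl (fun π _ => inner_RA hm π)]
  rw [Finset.sum_add_distrib, ← Finset.mul_sum, ← Finset.mul_sum, ← DD_sum]

/-! ### recurrence for `PT` -/

lemma perm_one_unique : ∀ σ : Equiv.Perm (Fin 1), σ = 1 := by
  intro σ
  apply Equiv.ext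
  intro j
  have h1 : σ j = j := Subsingleton.elim _ _
  simp [h1]

lemma sum_perm_one {β : Type*} [AddCommMonoid β] (F : Equiv.Perm (Fin 1) → β) :
    ∑ σ : Equiv.Perm (Fin 1), F σ = F 1 := by
  haveI : Subsingleton (Equiv.Perm (Fin 1)) :=
    ⟨fun a b => (perm_one_unique a).trans (perm_one_unique b).symm⟩
  rw [show (Finset.univ : Finset (Equiv.Perm (Fin 1))) = {1} from by
    apply Finset.eq_singleton_iff_unique_mem.mpr
    exact ⟨Finset.mem_univ _, fun x _ => perm_one_unique x⟩]
  rw [Finset.sum_singleton]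

lemma stats_one : bascNum (1 : Equiv.Perm (Fin 1)) = 0 ∧ desNum (1 : Equiv.Perm (Fin 1)) = 0
    ∧ sucNum (1 : Equiv.Perm (Fin 1)) = 0 ∧ ascNum (1 : Equiv.Perm (Fin 1)) = 0
    ∧ excNum (1 : Equiv.Perm (Fin 1)) = 0 ∧ aexcNum (1 : Equiv.Perm (Fin 1)) = 0
    ∧ fixNum (1 : Equiv.Perm (Fin 1)) = 1 := by
  have hval : permVal (1 : Equiv.Perm (Fin 1)) 1 = 1 := by
    rw [permVal_of _ (le_refl 1) (le_refl 1)]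
    simp
  have hIcc0 : (Icc 1 (1 - 1) : Finset ℕ) = ∅ := by decide
  refine ⟨?_, ?_, ?_, ?_, ?_, ?_, ?_⟩
  · rw [bascNum]; rw [hIcc0]; simp
  · rw [desNum]; rw [hIcc0]; simp
  · rw [sucNum]; rw [hIcc0]; simp
  · rw [ascNum]; rw [hIcc0]; simp
  · rw [excNum, show (Icc 1 1 : Finset ℕ) = {1} from by decide]
    rw [Finset.filter_singleton, if_neg (by rw [hval]; omega)]
    simp
  · rw [aexcNum, show (Icc 1 1 : Finset ℕ) = {1} from by decide]
    rw [Finset.filter_singleton, if_neg (by rw [hval]; omega)]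
    simp
  · rw [fixNum, show (Icc 1 1 : Finset ℕ) = {1} from by decide]
    rw [Finset.filter_singleton, if_pos (by rw [hval])]
    simp

lemma PT_one : PT 1 = X 1 := by
  rw [PT, if_neg one_ne_zero, sum_perm_one]
  rw [stats_one.2.2.2.1, stats_one.2.1]
  unfold W3
  simp

lemma inner_RT {m : ℕ} (hm : 1 ≤ m) (τ : Equiv.Perm (Fin m)) :
    ∑ p : Fin (m + 1), W3 (ascNum (insP τ p)) (desNum (insP τ p) + 1) 0
      = X 1 * W3 (ascNum τ) (desNum τ + 1) 0
        + X 0 * X 1 * DD (W3 (ascNum τ) (desNum τ + 1) 0) := by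
  classical
  set a := ascNum τ with ha
  set d := desNum τ with hd
  set T : ℕ → R3 := fun t =>
    if permVal τ (t + 1) < permVal τ t then W3 (a + 1) (d + 1) 0
    else W3 a (d + 2) 0 with hT
  rw [Fin.sum_univ_succ]
  have hzero : W3 (ascNum (insP τ 0)) (desNum (insP τ 0) + 1) 0 = W3 a (d + 2) 0 := by
    have hA := ascNum_insP τ 0 hm
    have hD := desNum_insP τ 0 hm
    simp only [Fin.val_zero] at hA hD
    rw [ind_neg (fun hc => absurd hc.1 (by omega)), ind_neg (by omega)] at hA
    rw [ind_neg (fun hc => absurd hc.1 (by omega)), ind_pos (by omega : (0 : ℕ) ≤ m - 1)] at hD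
    congr 1 <;> omega
  have hterm : ∀ i : Fin m,
      W3 (ascNum (insP τ i.succ)) (desNum (insP τ i.succ) + 1) 0 = T ((i : ℕ) + 1) := by
    intro i
    have hip : ((i.succ : Fin (m + 1)) : ℕ) = (i : ℕ) + 1 := by simp
    set t := (i : ℕ) + 1 with hts
    have ht1 : 1 ≤ t := by omega
    have ht2 : t ≤ m := by have := i.is_lt; omega
    have hA := ascNum_insP τ i.succ hm
    have hD := desNum_insP τ i.succ hm
    rw [hip] at hA hD
    simp only [hT]
    by_cases hDes : permVal τ (t + 1) < permVal τ t
    · rw [if_pos hDes]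
      rw [ind_neg (show ¬(1 ≤ t ∧ t ≤ m - 1 ∧ permVal τ t < permVal τ (t + 1)) from
        fun hc => by omega), ind_pos ht1] at hA
      by_cases htm : t ≤ m - 1
      · rw [ind_pos (show 1 ≤ t ∧ t ≤ m - 1 ∧ permVal τ (t + 1) < permVal τ t from
          ⟨ht1, htm, hDes⟩), ind_pos htm] at hD
        congr 1 <;> omega
      · rw [ind_neg (show ¬(1 ≤ t ∧ t ≤ m - 1 ∧ permVal τ (t + 1) < permVal τ t) from
          fun hc => absurd hc.2.1 htm), ind_neg htm] at hD
        congr 1 <;> omega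
    · rw [if_neg hDes]
      have htm : t ≤ m - 1 := by
        by_contra htm
        have ht : t = m := by omega
        have h0 : permVal τ (t + 1) = 0 := permVal_out τ (Or.inr (by omega))
        have := permVal_ge τ ht1 ht2
        omega
      have hne : permVal τ (t + 1) ≠ permVal τ t := fun hc =>
        absurd (permVal_inj τ (by omega) (by omega) ht1 ht2 hc) (by omega)
      have hgt : permVal τ t < permVal τ (t + 1) := by omega
      rw [ind_pos (show 1 ≤ t ∧ t ≤ m - 1 ∧ permVal τ t < permVal τ (t + 1) from
        ⟨ht1, htm, hgt⟩), ind_pos ht1] at hA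
      rw [ind_neg (show ¬(1 ≤ t ∧ t ≤ m - 1 ∧ permVal τ (t + 1) < permVal τ t) from
        fun hc => absurd hc.2.2 hDes), ind_pos htm] at hD
      congr 1 <;> omega
  rw [Finset.sum_congr rfl (fun i _ => hterm i), hzero]
  have hsum : ∑ i : Fin m, T ((i : ℕ) + 1) = ∑ t ∈ Icc 1 m, T t := by
    rw [Fin.sum_univ_eq_sum_range (fun j => T (j + 1)) m, sum_range_shift]
  rw [hsum]
  have hbuckets : ∑ t ∈ Icc 1 m, T t
      = (d + 1) • W3 (a + 1) (d + 1) 0 + a • W3 a (d + 2) 0 := by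
    simp only [hT]
    rw [Finset.sum_ite, Finset.sum_const, Finset.sum_const]
    rw [count_desD τ hm, count_notdes τ hm]
  rw [hbuckets, DD_W3]
  rw [show (X 1 : R3) * W3 a (d + 1) 0 = W3 a (d + 2) 0 from (W3_d_succ a (d + 1) 0).symm]
  simp only [nsmul_eq_mul, zero_smul, add_zero]
  push_cast
  ring

lemma RT (m : ℕ) : PT (m + 1) = X 1 * PT m + X 0 * X 1 * DD (PT m) := by
  rcases Nat.eq_zero_or_pos m with hm | hm
  · subst hm
    rw [PT_one, show PT 0 = 1 from if_pos rfl]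
    unfold DD
    simp
  · rw [show PT (m + 1) = ∑ τ : Equiv.Perm (Fin (m + 1)), W3 (ascNum τ) (desNum τ + 1) 0
        from if_neg (by omega),
      show PT m = ∑ τ : Equiv.Perm (Fin m), W3 (ascNum τ) (desNum τ + 1) 0 from if_neg (by omega)]
    rw [sum_insP (fun σ => W3 (ascNum σ) (desNum σ + 1) 0)]
    rw [Finset.sum_congr rfl (fun τ _ => inner_RT hm τ)]
    rw [Finset.sum_add_distrib, ← Finset.mul_sum, ← Finset.mul_sum, ← DD_sum]

end Stmt4Dev
namespace Stmt4Dev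

open Finset MvPolynomial

/-! ### base cases -/

lemma perm_zero_unique : ∀ σ : Equiv.Perm (Fin 0), σ = 1 := by
  intro σ
  apply Equiv.ext
  intro j
  exact absurd j.is_lt (by omega)

lemma sum_perm_zero {β : Type*} [AddCommMonoid β] (F : Equiv.Perm (Fin 0) → β) :
    ∑ σ : Equiv.Perm (Fin 0), F σ = F 1 := by
  rw [show (Finset.univ : Finset (Equiv.Perm (Fin 0))) = {1} from by
    apply Finset.eq_singleton_iff_unique_mem.mpr
    exact ⟨Finset.mem_univ _, fun x _ => perm_zero_unique x⟩]
  rw [Finset.sum_singleton]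

lemma stats_zero (σ : Equiv.Perm (Fin 0)) : bascNum σ = 0 ∧ desNum σ = 0 ∧ sucNum σ = 0
    ∧ ascNum σ = 0 ∧ excNum σ = 0 ∧ aexcNum σ = 0 ∧ fixNum σ = 0 := by
  have hIcc : (Icc 1 (0 - 1) : Finset ℕ) = ∅ := by decide
  have hIcc0 : (Icc 1 0 : Finset ℕ) = ∅ := by decide
  refine ⟨?_, ?_, ?_, ?_, ?_, ?_, ?_⟩ <;>
    simp [bascNum, desNum, sucNum, ascNum, excNum, aexcNum, fixNum, hIcc, hIcc0]

lemma PA_one : PA 1 = 1 := by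
  rw [PA, sum_perm_one]
  rw [stats_one.1, stats_one.2.1, stats_one.2.2.1, W3_zero]

lemma PT_zero : PT 0 = 1 := if_pos rfl

lemma PD_zero : PD 0 = 1 := by
  rw [PD, sum_perm_zero]
  rw [(stats_zero 1).2.2.2.2.1, (stats_zero 1).2.2.2.2.2.1, (stats_zero 1).2.2.2.2.2.2, W3_zero]

lemma DD_nsmul (c : ℕ) (f : R3) : DD (c • f) = c • DD f := by
  unfold DD
  rw [map_nsmul, map_nsmul, map_nsmul]
  rw [smul_add, smul_add]

/-! ### the polynomial identity -/

lemma PAident (n : ℕ) :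
    PA (n + 1) = ∑ i ∈ Finset.range (n + 1), (n.choose i) • (PT i * PD (n - i)) := by
  induction n with
  | zero =>
    rw [PA_one]
    rw [Finset.sum_range_one]
    simp [PT_zero, PD_zero]
  | succ n ih =>
    rw [RA (n + 1) (by omega), ih, DD_sum]
    have hterm : ∀ i ∈ Finset.range (n + 1),
        (X 2 + X 1) * ((n.choose i) • (PT i * PD (n - i)))
          + X 0 * X 1 * DD ((n.choose i) • (PT i * PD (n - i)))
        = (n.choose i) • (PT i * PD (n - i + 1)) + (n.choose i) • (PT (i + 1) * PD (n - i)) := by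
      intro i _
      rw [DD_nsmul, DD_mul, mul_smul_comm, mul_smul_comm, ← smul_add, ← smul_add]
      congr 1
      rw [RD (n - i), RT i]
      ring
    rw [Finset.mul_sum, Finset.mul_sum, ← Finset.sum_add_distrib,
      Finset.sum_congr rfl hterm, Finset.sum_add_distrib]
    -- reindex the second sum
    have hS2 : ∑ i ∈ Finset.range (n + 1), (n.choose i) • (PT (i + 1) * PD (n - i))
        = ∑ i ∈ Finset.range (n + 2),
            (if 1 ≤ i then (n.choose (i - 1)) • (PT i * PD (n + 1 - i)) else 0) := by
      rw [Finset.sum_range_succ' (fun i =>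
        if 1 ≤ i then (n.choose (i - 1)) • (PT i * PD (n + 1 - i)) else 0) (n + 1)]
      rw [if_neg (by omega), add_zero]
      apply Finset.sum_congr rfl
      intro i hi
      rw [if_pos (by omega)]
      simp only [Nat.add_sub_cancel, Nat.succ_sub_succ, Nat.sub_zero]
    have hS1 : ∑ i ∈ Finset.range (n + 1), (n.choose i) • (PT i * PD (n - i + 1))
        = ∑ i ∈ Finset.range (n + 2),
            (if i ≤ n then (n.choose i) • (PT i * PD (n + 1 - i)) else 0) := by
      rw [Finset.sum_range_succ (fun i =>
        if i ≤ n then (n.choose i) • (PT i * PD (n + 1 - i)) else 0) (n + 1)]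
      rw [if_neg (by omega), add_zero]
      apply Finset.sum_congr rfl
      intro i hi
      simp only [Finset.mem_range] at hi
      rw [if_pos (by omega), show n - i + 1 = n + 1 - i from by omega]
    rw [hS1, hS2, ← Finset.sum_add_distrib]
    apply Finset.sum_congr rfl
    intro i hi
    simp only [Finset.mem_range] at hi
    rcases Nat.eq_zero_or_pos i with hi0 | hi0
    · subst hi0
      rw [if_pos (by omega), if_neg (by omega), add_zero]
      simp
    · rcases Nat.lt_or_ge i (n + 1) with hin | hin
      · obtain ⟨k, rfl⟩ : ∃ k, i = k + 1 := ⟨i - 1, by omega⟩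
        rw [if_pos (by omega), if_pos (by omega), ← add_smul]
        congr 1
        simp only [Nat.add_sub_cancel, Nat.choose_succ_succ, Nat.succ_eq_add_one]
        omega
      · have hieq : i = n + 1 := by omega
        subst hieq
        rw [if_neg (by omega), if_pos (by omega), zero_add,
          show n + 1 - 1 = n from by omega, Nat.choose_self, Nat.choose_self]

end Stmt4Dev
namespace Stmt4Dev

open Finset MvPolynomial

/-! ### evaluation -/

noncomputable def ev (x y s : ℝ) : R3 →+* ℝ :=
  (MvPolynomial.eval (fun j : Fin 3 => if j = 0 then x else if j = 1 then y else s))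

lemma ev_W3 (x y s : ℝ) (b d u : ℕ) : ev x y s (W3 b d u) = x ^ b * y ^ d * s ^ u := by
  unfold ev W3
  rw [map_mul, map_mul, map_pow, map_pow, map_pow, eval_X, eval_X, eval_X]
  rw [if_pos rfl, if_neg (show ¬(1 : Fin 3) = 0 by decide), if_pos rfl,
    if_neg (show ¬(2 : Fin 3) = 0 by decide), if_neg (show ¬(2 : Fin 3) = 1 by decide)]

lemma ev_PA (x y s : ℝ) (m : ℕ) : ev x y s (PA m) = Apoly m x y s := by
  rw [PA, Apoly, map_sum]
  exact Finset.sum_congr rfl fun π _ => ev_W3 x y s _ _ _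

lemma ev_PT (x y s : ℝ) (m : ℕ) : ev x y s (PT m) = Atil m x y := by
  rw [PT, Atil]
  by_cases hm : m = 0
  · rw [if_pos hm, if_pos hm, map_one]
  · rw [if_neg hm, if_neg hm, map_sum]
    apply Finset.sum_congr rfl
    intro τ _
    rw [ev_W3]
    rw [pow_zero, mul_one]

lemma ev_PD (x y s : ℝ) (m : ℕ) : ev x y s (PD m) = dxys m x y s := by
  rw [PD, dxys, map_sum]
  exact Finset.sum_congr rfl fun π _ => ev_W3 x y s _ _ _

lemma part1 (n : ℕ) (x y s : ℝ) : Apoly (n + 1) x y s =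
    ∑ i ∈ Finset.range (n + 1), (n.choose i : ℝ) * Atil i x y * dxys (n - i) x y s := by
  rw [← ev_PA x y s, PAident n, map_sum]
  apply Finset.sum_congr rfl
  intro i _
  rw [map_nsmul, map_mul, ev_PT, ev_PD, nsmul_eq_mul, mul_assoc]

/-! ### part 2 reductions -/

lemma permVal_rev {m : ℕ} (σ : Equiv.Perm (Fin m)) {k : ℕ} (hk1 : 1 ≤ k) (hk2 : k ≤ m) :
    permVal (σ * Fin.revPerm) k = permVal σ (m + 1 - k) := by
  rw [permVal_of _ hk1 hk2, permVal_of σ (by omega) (by omega), Equiv.Perm.mul_apply]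
  congr 3
  apply Fin.ext
  show ((Fin.revPerm ⟨k - 1, by omega⟩ : Fin m) : ℕ) = _
  rw [Fin.revPerm_apply, Fin.val_rev]
  simp
  omega

lemma asc_rev {m : ℕ} (σ : Equiv.Perm (Fin m)) : ascNum (σ * Fin.revPerm) = desNum σ := by
  rw [ascNum, desNum]
  apply Finset.card_nbij' (fun j => m - j) (fun j => m - j)
  · intro j hj
    simp only [Finset.mem_coe, Finset.mem_filter, mem_Icc] at *
    obtain ⟨⟨hj1, hj2⟩, hj3⟩ := hj
    have hm2 : 2 ≤ m := by omega
    rw [permVal_rev σ (by omega) (by omega), permVal_rev σ (by omega) (by omega)] at hj3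
    refine ⟨⟨by omega, by omega⟩, ?_⟩
    rw [show m + 1 - j = m - j + 1 from by omega, show m + 1 - (j + 1) = m - j from by omega] at hj3
    exact hj3
  · intro j hj
    simp only [Finset.mem_coe, Finset.mem_filter, mem_Icc] at *
    obtain ⟨⟨hj1, hj2⟩, hj3⟩ := hj
    have hm2 : 2 ≤ m := by omega
    refine ⟨⟨by omega, by omega⟩, ?_⟩
    rw [permVal_rev σ (by omega) (by omega), permVal_rev σ (by omega) (by omega)]
    rw [show m + 1 - (m - j) = j + 1 from by omega, show m + 1 - (m - j + 1) = j from by omega]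
    exact hj3
  · intro j hj
    simp only [Finset.mem_coe, Finset.mem_filter, mem_Icc] at hj
    dsimp only
    omega
  · intro j hj
    simp only [Finset.mem_coe, Finset.mem_filter, mem_Icc] at hj
    dsimp only
    omega

lemma Atil_one (m : ℕ) (x : ℝ) : Atil m x 1 = EulerA m x := by
  by_cases hm : m = 0
  · subst hm
    rw [Atil, if_pos rfl, EulerA, sum_perm_zero, (stats_zero 1).2.1, pow_zero]
  · rw [Atil, if_neg hm, EulerA]
    have h1 : ∀ σ : Equiv.Perm (Fin m), x ^ ascNum σ * (1 : ℝ) ^ (desNum σ + 1) = x ^ ascNum σ := by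
      intro σ; rw [one_pow, mul_one]
    rw [Finset.sum_congr rfl fun σ _ => h1 σ]
    have hinv : ∀ a : Equiv.Perm (Fin m), a * Fin.revPerm * Fin.revPerm = a := by
      intro a
      apply Equiv.ext
      intro z
      simp [Equiv.Perm.mul_apply]
    apply Finset.sum_nbij' (i := fun σ : Equiv.Perm (Fin m) => σ * Fin.revPerm)
      (j := fun σ : Equiv.Perm (Fin m) => σ * Fin.revPerm)
    · intro a _; exact Finset.mem_univ _
    · intro a _; exact Finset.mem_univ _
    · intro a _; exact hinv a
    · intro a _; exact hinv a
    · intro a _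
      have h2 := asc_rev (a * Fin.revPerm)
      rw [hinv a] at h2
      rw [← h2]

lemma dxys_spec (m : ℕ) (x : ℝ) : dxys m x 1 0 = dpoly m x := by
  rw [dxys, dpoly, Finset.sum_filter]
  apply Finset.sum_congr rfl
  intro π _
  rw [one_pow, mul_one]
  by_cases hf : fixNum π = 0
  · rw [if_pos hf, hf, pow_zero, mul_one]
  · rw [if_neg hf, zero_pow hf, mul_zero]

end Stmt4Dev
theorem stmt4 : ∀ n : ℕ,
    (∀ x y s : ℝ, Apoly (n + 1) x y s =
      ∑ i ∈ Finset.range (n + 1), (n.choose i : ℝ) * Atil i x y * dxys (n - i) x y s) ∧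
    (∀ x : ℝ, Apoly (n + 1) x 1 0 =
      ∑ i ∈ Finset.range (n + 1), (n.choose i : ℝ) * EulerA i x * dpoly (n - i) x) := by
  intro n
  have h1 := Stmt4Dev.part1 n
  refine ⟨h1, ?_⟩
  intro x
  rw [h1 x 1 0]
  apply Finset.sum_congr rfl
  intro i _
  rw [Stmt4Dev.Atil_one, Stmt4Dev.dxys_spec]

end
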